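/- Let (η, ω₁, ω₂, ω₃) be an SU(2)-structure on N⁵ and define on N⁵ × (0,π): F = sin²t (sin t ω₁ + cos t ω₃) + sin t η∧dt, Ψ₊ = sin³t η∧ω₂ - sin²t(-cos t ω₁ + sin t ω₃)∧dt, Ψ₋ = sin³t(-cos t ω₁ + sin t ω₃)∧η + sin²t ω₂∧dt. Then the nearly Kähler equations dF = 3Ψ₊ and dΨ₋ = -2 F∧F hold if and only if dη = -2ω₃, dω₁ = 3η∧ω₂, dω₂ = -3η∧ω₁. -/

import Mathlib

open Real

variable {A : Type*}

/-- A form on `N⁵ × ℝ` is a pair `(α, β)` of `t`-dependent forms on `N⁵`, standing for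
`α(t) + β(t) ∧ dt`.  `dProd d k` is the exterior derivative on the product
(`k` = degree of the `dt`-free part): `d(α + β∧dt) = dα + ((-1)^k ∂ₜα + dβ) ∧ dt`. -/
noncomputable def dProd [NormedRing A] [NormedAlgebra ℝ A] (d : A →ₗ[ℝ] A) (k : ℕ)
    (ω : (ℝ → A) × (ℝ → A)) : (ℝ → A) × (ℝ → A) :=
  (fun t => d (ω.1 t), fun t => ((-1 : ℝ)) ^ k • deriv ω.1 t + d (ω.2 t))

/-- The sin-cone 2-form `F = sin²t (sin t ω₁ + cos t ω₃) + sin t η∧dt`. -/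
noncomputable def coneF [NormedRing A] [NormedAlgebra ℝ A] (η ω₁ ω₃ : A) :
    (ℝ → A) × (ℝ → A) :=
  (fun t => sin t ^ 2 • (sin t • ω₁ + cos t • ω₃), fun t => sin t • η)

/-- The sin-cone 3-form `Ψ₊ = sin³t η∧ω₂ - sin²t(-cos t ω₁ + sin t ω₃)∧dt`. -/
noncomputable def conePsiPlus [NormedRing A] [NormedAlgebra ℝ A] (η ω₁ ω₂ ω₃ : A) :
    (ℝ → A) × (ℝ → A) :=
  (fun t => sin t ^ 3 • (η * ω₂), fun t => -(sin t ^ 2) • (-(cos t) • ω₁ + sin t • ω₃))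

/-- The sin-cone 3-form `Ψ₋ = sin³t(-cos t ω₁ + sin t ω₃)∧η + sin²t ω₂∧dt`. -/
noncomputable def conePsiMinus [NormedRing A] [NormedAlgebra ℝ A] (η ω₁ ω₂ ω₃ : A) :
    (ℝ → A) × (ℝ → A) :=
  (fun t => sin t ^ 3 • ((-(cos t) • ω₁ + sin t • ω₃) * η), fun t => sin t ^ 2 • ω₂)

/-- The wedge square `ω∧ω` of a product form `ω = α + β∧dt` whose `dt`-free part has even
degree: `(α + β∧dt)² = α∧α + (α∧β + β∧α)∧dt`. -/
noncomputable def wedgeSq [NormedRing A] (ω : (ℝ → A) × (ℝ → A)) : (ℝ → A) × (ℝ → A) :=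
  (fun t => ω.1 t * ω.1 t, fun t => ω.1 t * ω.2 t + ω.2 t * ω.1 t)


private lemma derivSmulTwo [NormedRing A] [NormedAlgebra ℝ A] {f g : ℝ → ℝ} {f' g' t : ℝ}
    (hf : HasDerivAt f f' t) (hg : HasDerivAt g g' t) (x y : A) :
    deriv (fun s => f s • x + g s • y) t = f' • x + g' • y :=
  ((hf.smul_const x).add (hg.smul_const y)).deriv

/-- For an SU(2)-structure `(η, ω₁, ω₂, ω₃)` on `N⁵`, the nearly Kähler
equations `dF = 3Ψ₊` and `dΨ₋ = -2 F∧F` hold on the sin-cone `N⁵ × (0,π)` if and only if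
`dη = -2ω₃`, `dω₁ = 3η∧ω₂`, `dω₂ = -3η∧ω₁` (i.e. the structure is Sasaki-Einstein). -/
theorem sinCone_nearlyKaehler_iff_sasakiEinstein [NormedRing A] [NormedAlgebra ℝ A]
    (d : A →ₗ[ℝ] A) (η ω₁ ω₂ ω₃ v : A)
    -- SU(2)-structure compatibility: ω₁∧ω₁ = ω₂∧ω₂ = ω₃∧ω₃ = v, ωᵢ∧ωⱼ = 0 (i ≠ j), η∧v ≠ 0
    (h11 : ω₁ * ω₁ = v) (h22 : ω₂ * ω₂ = v) (h33 : ω₃ * ω₃ = v)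
    (h12 : ω₁ * ω₂ = 0) (h21 : ω₂ * ω₁ = 0) (h13 : ω₁ * ω₃ = 0)
    (h31 : ω₃ * ω₁ = 0) (h23 : ω₂ * ω₃ = 0) (h32 : ω₃ * ω₂ = 0)
    (hnd : η * v ≠ 0) (hηη : η * η = 0)
    -- graded commutativity: 2-forms commute with the 1-form η
    (hc₁ : ω₁ * η = η * ω₁) (hc₂ : ω₂ * η = η * ω₂) (hc₃ : ω₃ * η = η * ω₃)
    (hdd : ∀ x : A, d (d x) = 0)
    -- graded Leibniz rules
    (hLη₁ : d (η * ω₁) = d η * ω₁ - η * d ω₁)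
    (hLη₂ : d (η * ω₂) = d η * ω₂ - η * d ω₂)
    (hLη₃ : d (η * ω₃) = d η * ω₃ - η * d ω₃)
    (hL₁η : d (ω₁ * η) = d ω₁ * η + ω₁ * d η)
    (hL₂η : d (ω₂ * η) = d ω₂ * η + ω₂ * d η)
    (hL₃η : d (ω₃ * η) = d ω₃ * η + ω₃ * d η) :
    ((∀ t ∈ Set.Ioo (0 : ℝ) π,
        (dProd d 2 (coneF η ω₁ ω₃)).1 t = (3 : ℝ) • (conePsiPlus η ω₁ ω₂ ω₃).1 t ∧
        (dProd d 2 (coneF η ω₁ ω₃)).2 t = (3 : ℝ) • (conePsiPlus η ω₁ ω₂ ω₃).2 t ∧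
        (dProd d 3 (conePsiMinus η ω₁ ω₂ ω₃)).1 t
          = (-2 : ℝ) • (wedgeSq (coneF η ω₁ ω₃)).1 t ∧
        (dProd d 3 (conePsiMinus η ω₁ ω₂ ω₃)).2 t
          = (-2 : ℝ) • (wedgeSq (coneF η ω₁ ω₃)).2 t) ↔
      (d η = (-2 : ℝ) • ω₃ ∧ d ω₁ = (3 : ℝ) • (η * ω₂) ∧
        d ω₂ = (-3 : ℝ) • (η * ω₁))) := by
  
  have hF1 : (coneF η ω₁ ω₃ : (ℝ → A) × (ℝ → A)).1
      = fun t => (sin t ^ 3) • ω₁ + (sin t ^ 2 * cos t) • ω₃ := by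
    funext t
    simp only [coneF]
    match_scalars <;> ring
  have hP1 : (conePsiMinus η ω₁ ω₂ ω₃ : (ℝ → A) × (ℝ → A)).1
      = fun t => (-(sin t ^ 3 * cos t)) • (ω₁ * η) + (sin t ^ 4) • (ω₃ * η) := by
    funext t
    simp only [conePsiMinus, add_mul, smul_mul_assoc]
    match_scalars <;> ring
  have hdF1 : ∀ t : ℝ, deriv (coneF η ω₁ ω₃ : (ℝ → A) × (ℝ → A)).1 t
      = (3 * sin t ^ 2 * cos t) • ω₁ + (2 * sin t * cos t ^ 2 - sin t ^ 3) • ω₃ := by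
    intro t
    rw [hF1]
    have h3 : HasDerivAt (fun s : ℝ => sin s ^ 3) (3 * sin t ^ 2 * cos t) t := by
      have : HasDerivAt (fun s : ℝ => sin s ^ 3) _ t := (Real.hasDerivAt_sin t).fun_pow 3
      convert this using 1 <;> push_cast <;> ring
    have hsc : HasDerivAt (fun s : ℝ => sin s ^ 2 * cos s)
        (2 * sin t * cos t ^ 2 - sin t ^ 3) t := by
      have : HasDerivAt (fun s : ℝ => sin s ^ 2 * cos s) _ t :=
        ((Real.hasDerivAt_sin t).fun_pow 2).mul (Real.hasDerivAt_cos t)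
      convert this using 1 <;> push_cast <;> ring
    exact derivSmulTwo h3 hsc ω₁ ω₃
  have hdP1 : ∀ t : ℝ, deriv (conePsiMinus η ω₁ ω₂ ω₃ : (ℝ → A) × (ℝ → A)).1 t
      = (sin t ^ 4 - 3 * sin t ^ 2 * cos t ^ 2) • (ω₁ * η)
        + (4 * sin t ^ 3 * cos t) • (ω₃ * η) := by
    intro t
    rw [hP1]
    have h1 : HasDerivAt (fun s : ℝ => -(sin s ^ 3 * cos s))
        (sin t ^ 4 - 3 * sin t ^ 2 * cos t ^ 2) t := by
      have : HasDerivAt (fun s : ℝ => -(sin s ^ 3 * cos s)) _ t :=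
        (((Real.hasDerivAt_sin t).fun_pow 3).mul (Real.hasDerivAt_cos t)).neg
      convert this using 1 <;> push_cast <;> ring
    have h2 : HasDerivAt (fun s : ℝ => sin s ^ 4) (4 * sin t ^ 3 * cos t) t := by
      have : HasDerivAt (fun s : ℝ => sin s ^ 4) _ t := (Real.hasDerivAt_sin t).fun_pow 4
      convert this using 1 <;> push_cast <;> ring
    exact derivSmulTwo h1 h2 (ω₁ * η) (ω₃ * η)
  -- Clean pointwise formulas for the four equations
  have eA : ∀ t : ℝ, (dProd d 2 (coneF η ω₁ ω₃)).1 t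
      = sin t ^ 3 • d ω₁ + (sin t ^ 2 * cos t) • d ω₃ := by
    intro t
    simp only [dProd, hF1, map_add, map_smul]
  have eB : ∀ t : ℝ, (dProd d 2 (coneF η ω₁ ω₃)).2 t
      = (3 * sin t ^ 2 * cos t) • ω₁ + (2 * sin t * cos t ^ 2 - sin t ^ 3) • ω₃
        + sin t • d η := by
    intro t
    have h0 : (dProd d 2 (coneF η ω₁ ω₃)).2 t
        = ((-1 : ℝ)) ^ 2 • deriv (coneF η ω₁ ω₃).1 t + d ((coneF η ω₁ ω₃).2 t) := rfl
    rw [h0, hdF1]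
    simp only [coneF, map_smul]
    match_scalars <;> ring
  have eC : ∀ t : ℝ, (dProd d 3 (conePsiMinus η ω₁ ω₂ ω₃)).1 t
      = (-(sin t ^ 3 * cos t)) • d (ω₁ * η) + sin t ^ 4 • d (ω₃ * η) := by
    intro t
    simp only [dProd, hP1, map_add, map_smul]
  have eD : ∀ t : ℝ, (dProd d 3 (conePsiMinus η ω₁ ω₂ ω₃)).2 t
      = (3 * sin t ^ 2 * cos t ^ 2 - sin t ^ 4) • (ω₁ * η)
        + (-(4 * sin t ^ 3 * cos t)) • (ω₃ * η) + sin t ^ 2 • d ω₂ := by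
    intro t
    have h0 : (dProd d 3 (conePsiMinus η ω₁ ω₂ ω₃)).2 t
        = ((-1 : ℝ)) ^ 3 • deriv (conePsiMinus η ω₁ ω₂ ω₃).1 t
          + d ((conePsiMinus η ω₁ ω₂ ω₃).2 t) := rfl
    rw [h0, hdP1]
    simp only [conePsiMinus, map_smul]
    match_scalars <;> ring
  have rA : ∀ t : ℝ, (3 : ℝ) • (conePsiPlus η ω₁ ω₂ ω₃ : (ℝ → A) × (ℝ → A)).1 t
      = (3 * sin t ^ 3) • (η * ω₂) := by
    intro t
    simp only [conePsiPlus]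
    match_scalars <;> ring
  have rB : ∀ t : ℝ, (3 : ℝ) • (conePsiPlus η ω₁ ω₂ ω₃ : (ℝ → A) × (ℝ → A)).2 t
      = (3 * sin t ^ 2 * cos t) • ω₁ + (-(3 * sin t ^ 3)) • ω₃ := by
    intro t
    simp only [conePsiPlus]
    match_scalars <;> ring
  have rC : ∀ t : ℝ, (-2 : ℝ) • (wedgeSq (coneF η ω₁ ω₃)).1 t
      = (-(2 * sin t ^ 6) - 2 * sin t ^ 4 * cos t ^ 2) • v := by
    intro t
    simp only [wedgeSq, hF1, add_mul, mul_add, smul_mul_assoc, mul_smul_comm,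
      h11, h33, h13, h31, smul_zero, add_zero, zero_add]
    match_scalars <;> ring
  have rD : ∀ t : ℝ, (-2 : ℝ) • (wedgeSq (coneF η ω₁ ω₃)).2 t
      = (-(4 * sin t ^ 4)) • (η * ω₁) + (-(4 * sin t ^ 3 * cos t)) • (η * ω₃) := by
    intro t
    simp only [wedgeSq, hF1, coneF, add_mul, mul_add, smul_mul_assoc, mul_smul_comm,
      hc₁, hc₃]
    match_scalars <;> ring
  constructor
  · -- forward direction: evaluate at t = π/2
    intro h
    have hmem : (π / 2 : ℝ) ∈ Set.Ioo (0 : ℝ) π :=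
      ⟨by positivity, half_lt_self Real.pi_pos⟩
    obtain ⟨E1, E2, E3, E4⟩ := h (π / 2) hmem
    rw [eA, rA] at E1
    rw [eB, rB] at E2
    rw [eD, rD] at E4
    simp only [Real.sin_pi_div_two, Real.cos_pi_div_two] at E1 E2 E4
    norm_num at E1 E2 E4
    have hdη : d η = (-2 : ℝ) • ω₃ := by
      linear_combination (norm := module) E2
    refine ⟨hdη, E1, ?_⟩
    rw [hc₁] at E4
    linear_combination (norm := module) E4
  · -- backward direction
    rintro ⟨hdη, hdω₁, hdω₂⟩
    have hdω₃ : d ω₃ = 0 := by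
      have h0 : d (d η) = 0 := hdd η
      rw [hdη, map_smul] at h0
      have := smul_eq_zero.mp h0
      rcases this with h | h
      · norm_num at h
      · exact h
    have hω₁η : d (ω₁ * η) = 0 := by
      rw [hL₁η, hdω₁, hdη, smul_mul_assoc, mul_smul_comm, h13, smul_zero, add_zero]
      rw [mul_assoc, hc₂, ← mul_assoc, hηη, zero_mul, smul_zero]
    have hω₃η : d (ω₃ * η) = (-2 : ℝ) • v := by
      rw [hL₃η, hdω₃, zero_mul, zero_add, hdη, mul_smul_comm, h33]
    intro t _
    refine ⟨?_, ?_, ?_, ?_⟩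
    · rw [eA, rA, hdω₁, hdω₃, smul_zero, add_zero]
      match_scalars; ring
    · rw [eB, rB, hdη]
      rw [Real.cos_sq']
      match_scalars <;> ring
    · rw [eC, rC, hω₁η, hω₃η, smul_zero, zero_add]
      rw [Real.cos_sq']
      match_scalars; ring
    · rw [eD, rD, hdω₂, hc₁, hc₃]
      rw [Real.cos_sq']
      match_scalars <;> ring
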